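/- In the higher tetrahedral algebra Λ = Λ(m,λ), set X̃_2 = εηβ, X̃_4 = βεη, X̃_5 = ηβε. Then X_2 = X̃_2 + λX_2^m, X_4 = X̃_4 + λX_4^m, X_5 = X̃_5 + λX_5^m, and consequently X_2^m = (X̃_2)^m, X_4^m = (X̃_4)^m, X_5^m = (X̃_5)^m. -/

import Mathlib

open scoped TensorProduct

namespace HigherTetrahedral

/-- The twelve arrows of the tetrahedral triangulation quiver. -/
inductive Arr : Type
  | nu | de | ep | rh | si | al | ga | be | xi | et | om | mu
  deriving DecidableEq

instance : Fintype Arr :=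
  ⟨{Arr.nu, Arr.de, Arr.ep, Arr.rh, Arr.si, Arr.al, Arr.ga, Arr.be, Arr.xi, Arr.et,
    Arr.om, Arr.mu}, by intro x; cases x <;> decide⟩

open Arr

/-- Source vertex of each arrow (vertex `v` is `⟨v-1⟩ : Fin 6`). -/
def src : Arr → Fin 6
  | nu => 0 | de => 0 | ep => 1 | rh => 1 | si => 2 | al => 2
  | ga => 3 | be => 3 | xi => 4 | et => 4 | om => 5 | mu => 5

/-- Target vertex of each arrow. -/
def tgt : Arr → Fin 6
  | nu => 5 | de => 4 | ep => 4 | rh => 5 | si => 1 | al => 0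
  | ga => 0 | be => 1 | xi => 2 | et => 3 | om => 3 | mu => 2

/-- The permutation `f` of arrows, with orbits (δ η γ), (ε ξ σ), (ρ ω β), (ν μ α). -/
def f : Arr → Arr
  | de => et | et => ga | ga => de
  | ep => xi | xi => si | si => ep
  | rh => om | om => be | be => rh
  | nu => mu | mu => al | al => nu

/-- The permutation `g`: `g θ` is the arrow starting at `tgt θ` other than `f θ`. -/
def g : Arr → Arr
  | de => xi | et => be | ga => nu
  | ep => et | xi => al | si => rh
  | rh => mu | om => ga | be => ep
  | nu => om | mu => si | al => de

variable (K : Type) [Field K]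

/-- The ambient free algebra on the vertices and arrows. -/
abbrev FreeTet := FreeAlgebra K ((Fin 6) ⊕ Arr)

/-- Generator corresponding to a vertex. -/
def V (i : Fin 6) : FreeTet K := FreeAlgebra.ι K (Sum.inl i)

/-- Generator corresponding to an arrow. -/
def A (θ : Arr) : FreeTet K := FreeAlgebra.ι K (Sum.inr θ)

variable (m : ℕ) (lam : K)

/-- The defining relations of the higher tetrahedral algebra `Λ(m,λ)`, together with
the path-algebra relations for the vertex idempotents. -/
inductive TetRel : FreeTet K → FreeTet K → Prop
  | idem (i j : Fin 6) : TetRel (V K i * V K j) (if i = j then V K i else 0)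
  | sum_one : TetRel (∑ i : Fin 6, V K i) 1
  | src_tgt (θ : Arr) : TetRel (V K (src θ) * A K θ * V K (tgt θ)) (A K θ)
  | rel_ga : TetRel (A K ga * A K de)
      (A K be * A K ep + lam • ((A K be * A K rh * A K om) ^ (m - 1) * (A K be * A K ep)))
  | rel_rh : TetRel (A K rh * A K om)
      (A K ep * A K et + lam • ((A K ep * A K xi * A K si) ^ (m - 1) * (A K ep * A K et)))
  | rel_xi : TetRel (A K xi * A K si)
      (A K et * A K be + lam • ((A K et * A K ga * A K de) ^ (m - 1) * (A K et * A K be)))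
  | rel_de : TetRel (A K de * A K et) (A K nu * A K om)
  | rel_om : TetRel (A K om * A K be) (A K mu * A K si)
  | rel_si : TetRel (A K si * A K ep) (A K al * A K de)
  | rel_et : TetRel (A K et * A K ga) (A K xi * A K al)
  | rel_be : TetRel (A K be * A K rh) (A K ga * A K nu)
  | rel_ep : TetRel (A K ep * A K xi) (A K rh * A K mu)
  | rel_nu : TetRel (A K nu * A K mu) (A K de * A K xi)
  | rel_mu : TetRel (A K mu * A K al) (A K om * A K ga)
  | rel_al : TetRel (A K al * A K nu) (A K si * A K rh)
  | zero_rel (θ : Arr) : TetRel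
      ((A K θ * A K (f θ) * A K (f (f θ))) ^ (m - 1) * (A K θ * A K (f θ)) * A K (g (f θ))) 0

/-- The higher tetrahedral algebra `Λ(m,λ)`. -/
abbrev Tet := RingQuot (TetRel K m lam)

/-- The idempotent of `Λ(m,λ)` at a vertex. -/
def e (i : Fin 6) : Tet K m lam := RingQuot.mkAlgHom K (TetRel K m lam) (V K i)

/-- The image in `Λ(m,λ)` of an arrow. -/
def a (θ : Arr) : Tet K m lam := RingQuot.mkAlgHom K (TetRel K m lam) (A K θ)

/-- The elements `X_i` (vertex `i+1` in the paper's numbering):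
`X₁ = δηγ`, `X₂ = ρωβ`, `X₃ = ανμ`, `X₄ = γδη`, `X₅ = ηγδ`, `X₆ = ωβρ`. -/
def X : Fin 6 → Tet K m lam
  | 0 => a K m lam de * a K m lam et * a K m lam ga
  | 1 => a K m lam rh * a K m lam om * a K m lam be
  | 2 => a K m lam al * a K m lam nu * a K m lam mu
  | 3 => a K m lam ga * a K m lam de * a K m lam et
  | 4 => a K m lam et * a K m lam ga * a K m lam de
  | 5 => a K m lam om * a K m lam be * a K m lam rh

/-- Product in `Λ(m,λ)` of a list of arrows (a path, read left to right). -/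
def pathProd (l : List Arr) : Tet K m lam := (l.map (a K m lam)).prod

/-- `IsPath i j l` : the list of arrows `l` is a (composable) path from vertex `i`
to vertex `j`. -/
def IsPath (i j : Fin 6) (l : List Arr) : Prop :=
  l ≠ [] ∧ l.Chain' (fun x y => tgt x = src y) ∧
    (∀ h : l ≠ [], src (l.head h) = i ∧ tgt (l.getLast h) = j)

end HigherTetrahedral



section AuxHelpers

/-- In any ring, if `t = s + λ•(t^(m-1) * s)` and `t^(m+1) = 0` (with `2 ≤ m`), then
`t = s + λ•t^m` and `t^m = s^m`. -/
theorem HT.pow_helper {R : Type} [Ring R] {K : Type} [Field K] [Algebra K R]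
    {m : ℕ} (hm : 2 ≤ m) (lam : K) (t s : R)
    (h : t = s + lam • (t ^ (m - 1) * s))
    (hnil : t ^ (m + 1) = 0) :
    t = s + lam • t ^ m ∧ t ^ m = s ^ m := by
  have hge : ∀ N, m + 1 ≤ N → t ^ N = 0 := by
    intro N hN
    obtain ⟨k, rfl⟩ := Nat.exists_eq_add_of_le hN
    rw [pow_add, hnil, zero_mul]
  have hs : s = t - lam • (t ^ (m - 1) * s) := eq_sub_of_add_eq h.symm
  have h2s : t ^ (2 * m - 2) * s = 0 := by
    conv_lhs => rw [hs]
    rw [mul_sub, mul_smul_comm, ← mul_assoc, ← pow_add, ← pow_succ]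
    rw [hge (2 * m - 2 + 1) (by omega), hge (2 * m - 2 + (m - 1)) (by omega),
      zero_mul, smul_zero, sub_zero]
  have hpm : t ^ m = t ^ (m - 1) * s := by
    have e : t ^ m = t ^ (m - 1) * t := by
      have e2 : m - 1 + 1 = m := by omega
      rw [← pow_succ, e2]
    calc t ^ m = t ^ (m - 1) * (s + lam • (t ^ (m - 1) * s)) := by rw [e, ← h]
      _ = t ^ (m - 1) * s + lam • (t ^ (m - 1) * (t ^ (m - 1) * s)) := by
          rw [mul_add, mul_smul_comm]
      _ = t ^ (m - 1) * s + lam • (t ^ (2 * m - 2) * s) := by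
          have e2 : m - 1 + (m - 1) = 2 * m - 2 := by omega
          rw [← mul_assoc, ← pow_add, e2]
      _ = t ^ (m - 1) * s := by rw [h2s, smul_zero, add_zero]
  have hst : s = t - lam • t ^ m := by rw [hpm]; exact hs
  refine ⟨by rw [hpm]; exact h, ?_⟩
  set u : R := 1 - lam • t ^ (m - 1) with hu
  have hcomm : Commute t u :=
    Commute.sub_right (Commute.one_right t)
      (Commute.smul_right (Commute.pow_right (Commute.refl t) _) lam)
  have hsu : s = t * u := by
    have e2 : m - 1 + 1 = m := by omega
    rw [hst, hu, mul_sub, mul_one, mul_smul_comm, ← pow_succ', e2]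
  have key : ∀ k, t ^ m * u ^ k = t ^ m := by
    intro k
    induction k with
    | zero => rw [pow_zero, mul_one]
    | succ k ih =>
      rw [pow_succ, ← mul_assoc, ih, hu, mul_sub, mul_one, mul_smul_comm, ← pow_add]
      have e : m + (m - 1) = m + 1 + (m - 2) := by omega
      rw [e, pow_add, hnil, zero_mul, smul_zero, sub_zero]
  rw [hsu, hcomm.mul_pow, key]

theorem HT.mul_pow_shift {R : Type} [Monoid R] (x y : R) (n : ℕ) :
    x * (y * x) ^ n = (x * y) ^ n * x := by
  induction n with
  | zero => rw [pow_zero, pow_zero, mul_one, one_mul]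
  | succ n ih =>
    rw [pow_succ', ← mul_assoc x (y * x), ← mul_assoc x y x,
      mul_assoc (x * y) x ((y * x) ^ n), ih, ← mul_assoc, ← pow_succ']

/-- If `(x*y*z)^n * (x*y) * w = 0` and `z*x = w*v`, then `(x*y*z)^(n+2) = 0`. -/
theorem HT.caseB {R : Type} [Ring R] (n : ℕ) (x y z w v : R)
    (hz : (x * y * z) ^ n * (x * y) * w = 0) (hbr : z * x = w * v) :
    (x * y * z) ^ (n + 2) = 0 := by
  have hbr' : ∀ q : R, z * (x * q) = w * (v * q) := fun q => by
    rw [← mul_assoc, ← mul_assoc, hbr]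
  have hzc : ∀ c : R, (x * (y * z)) ^ n * (x * (y * (w * c))) = 0 := by
    intro c
    have := congrArg (· * c) hz
    simp only [mul_assoc, zero_mul] at this
    simpa only [mul_assoc] using this
  rw [pow_succ, pow_succ]
  simp only [mul_assoc]
  rw [hbr']
  exact hzc _

/-- Case-A helper (cases 2 and 4): `t = x*y*z`,
relation `x*y = s1*s2 + λ•(U^(m-1) * (s1*s2))` with `U = t`. -/
theorem HT.caseA {R : Type} [Ring R] {K : Type} [Field K] [Algebra K R]
    (m : ℕ) (lam : K) (x y z s1 s2 u1 u2 u3 : R)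
    (hrel : x * y = s1 * s2 + lam • ((u1 * u2 * u3) ^ (m - 1) * (s1 * s2)))
    (hu : u1 * u2 * u3 = x * y * z) :
    x * y * z = s1 * s2 * z + lam • ((x * y * z) ^ (m - 1) * (s1 * s2 * z)) := by
  conv_lhs => rw [hrel]
  rw [add_mul, smul_mul_assoc, mul_assoc ((u1 * u2 * u3) ^ (m - 1)), hu]

/-- Case-A helper (case 5): `t = x*y*z`, relation on `y*z`,
with `U = y*z*x`. -/
theorem HT.caseA' {R : Type} [Ring R] {K : Type} [Field K] [Algebra K R]
    (m : ℕ) (lam : K) (x y z s2 s3 u2 u3 : R)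
    (hrel : y * z = s2 * s3 + lam • ((s2 * u2 * u3) ^ (m - 1) * (s2 * s3)))
    (hu : s2 * u2 * u3 = y * z * x) :
    x * y * z = x * s2 * s3 + lam • ((x * y * z) ^ (m - 1) * (x * s2 * s3)) := by
  have h1 : x * (s2 * s3) = x * s2 * s3 := (mul_assoc x s2 s3).symm
  have h2 : x * ((y * z * x) ^ (m - 1) * (s2 * s3)) =
      (x * y * z) ^ (m - 1) * (x * s2 * s3) :=
    calc x * ((y * z * x) ^ (m - 1) * (s2 * s3))
        = (x * ((y * z) * x) ^ (m - 1)) * (s2 * s3) := (mul_assoc _ _ _).symm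
      _ = ((x * (y * z)) ^ (m - 1) * x) * (s2 * s3) := by rw [HT.mul_pow_shift]
      _ = (x * y * z) ^ (m - 1) * x * (s2 * s3) := by rw [mul_assoc x y z]
      _ = (x * y * z) ^ (m - 1) * (x * (s2 * s3)) := mul_assoc _ _ _
      _ = (x * y * z) ^ (m - 1) * (x * s2 * s3) := by rw [h1]
  calc x * y * z = x * (y * z) := mul_assoc x y z
    _ = x * (s2 * s3 + lam • ((s2 * u2 * u3) ^ (m - 1) * (s2 * s3))) := by rw [← hrel]
    _ = x * (s2 * s3) + lam • (x * ((y * z * x) ^ (m - 1) * (s2 * s3))) := by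
        rw [mul_add, mul_smul_comm, hu]
    _ = x * s2 * s3 + lam • ((x * y * z) ^ (m - 1) * (x * s2 * s3)) := by rw [h1, h2]

namespace HigherTetrahedral

open Arr

variable {K : Type} [Field K] {m : ℕ} {lam : K}

private lemma amap (θ : Arr) :
    RingQuot.mkAlgHom K (TetRel K m lam) (A K θ) = a K m lam θ := rfl

private lemma rel_ep' : a K m lam ep * a K m lam xi = a K m lam rh * a K m lam mu := by
  have := RingQuot.mkAlgHom_rel K (TetRel.rel_ep (K := K) (m := m) (lam := lam))
  simpa only [map_mul, amap] using this

private lemma rel_om' : a K m lam om * a K m lam be = a K m lam mu * a K m lam si := by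
  have := RingQuot.mkAlgHom_rel K (TetRel.rel_om (K := K) (m := m) (lam := lam))
  simpa only [map_mul, amap] using this

private lemma rel_be' : a K m lam be * a K m lam rh = a K m lam ga * a K m lam nu := by
  have := RingQuot.mkAlgHom_rel K (TetRel.rel_be (K := K) (m := m) (lam := lam))
  simpa only [map_mul, amap] using this

private lemma rel_de' : a K m lam de * a K m lam et = a K m lam nu * a K m lam om := by
  have := RingQuot.mkAlgHom_rel K (TetRel.rel_de (K := K) (m := m) (lam := lam))
  simpa only [map_mul, amap] using this

private lemma rel_et' : a K m lam et * a K m lam ga = a K m lam xi * a K m lam al := by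
  have := RingQuot.mkAlgHom_rel K (TetRel.rel_et (K := K) (m := m) (lam := lam))
  simpa only [map_mul, amap] using this

private lemma rel_rh' : a K m lam rh * a K m lam om =
    a K m lam ep * a K m lam et +
      lam • ((a K m lam ep * a K m lam xi * a K m lam si) ^ (m - 1) *
        (a K m lam ep * a K m lam et)) := by
  have := RingQuot.mkAlgHom_rel K (TetRel.rel_rh (K := K) (m := m) (lam := lam))
  simpa only [map_mul, map_add, map_smul, map_pow, amap] using this

private lemma rel_ga' : a K m lam ga * a K m lam de =
    a K m lam be * a K m lam ep +
      lam • ((a K m lam be * a K m lam rh * a K m lam om) ^ (m - 1) *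
        (a K m lam be * a K m lam ep)) := by
  have := RingQuot.mkAlgHom_rel K (TetRel.rel_ga (K := K) (m := m) (lam := lam))
  simpa only [map_mul, map_add, map_smul, map_pow, amap] using this

private lemma zero' (θ : Arr) :
    (a K m lam θ * a K m lam (f θ) * a K m lam (f (f θ))) ^ (m - 1) *
      (a K m lam θ * a K m lam (f θ)) * a K m lam (g (f θ)) = 0 := by
  have := RingQuot.mkAlgHom_rel K (TetRel.zero_rel (K := K) (m := m) (lam := lam) θ)
  simpa only [map_mul, map_pow, map_zero, amap] using this

private lemma zrh : (a K m lam rh * a K m lam om * a K m lam be) ^ (m - 1) *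
    (a K m lam rh * a K m lam om) * a K m lam ga = 0 := zero' rh

private lemma zga : (a K m lam ga * a K m lam de * a K m lam et) ^ (m - 1) *
    (a K m lam ga * a K m lam de) * a K m lam xi = 0 := zero' ga

private lemma zet : (a K m lam et * a K m lam ga * a K m lam de) ^ (m - 1) *
    (a K m lam et * a K m lam ga) * a K m lam nu = 0 := zero' et

private lemma hu2 : a K m lam ep * a K m lam xi * a K m lam si =
    a K m lam rh * a K m lam om * a K m lam be := by
  rw [rel_ep', mul_assoc, ← rel_om', ← mul_assoc]

private lemma hu4 : a K m lam be * a K m lam rh * a K m lam om =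
    a K m lam ga * a K m lam de * a K m lam et := by
  rw [rel_be', mul_assoc, ← rel_de', ← mul_assoc]

end HigherTetrahedral

end AuxHelpers

open HigherTetrahedral Arr in
/-- With `X̃₂ = εηβ`, `X̃₄ = βεη`, `X̃₅ = ηβε` in `Λ(m,λ)`, we have
`X₂ = X̃₂ + λX₂^m`, `X₄ = X̃₄ + λX₄^m`, `X₅ = X̃₅ + λX₅^m`, and consequently
`X₂^m = X̃₂^m`, `X₄^m = X̃₄^m`, `X₅^m = X̃₅^m`. -/
theorem X_tilde (K : Type) [Field K] (m : ℕ) (hm : 2 ≤ m) (lam : K) :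
    X K m lam 1 = a K m lam ep * a K m lam et * a K m lam be + lam • (X K m lam 1 ^ m) ∧
    X K m lam 3 = a K m lam be * a K m lam ep * a K m lam et + lam • (X K m lam 3 ^ m) ∧
    X K m lam 4 = a K m lam et * a K m lam be * a K m lam ep + lam • (X K m lam 4 ^ m) ∧
    X K m lam 1 ^ m = (a K m lam ep * a K m lam et * a K m lam be) ^ m ∧
    X K m lam 3 ^ m = (a K m lam be * a K m lam ep * a K m lam et) ^ m ∧
    X K m lam 4 ^ m = (a K m lam et * a K m lam be * a K m lam ep) ^ m := by
  have hX1 : X K m lam 1 = a K m lam rh * a K m lam om * a K m lam be := rfl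
  have hX3 : X K m lam 3 = a K m lam ga * a K m lam de * a K m lam et := rfl
  have hX4 : X K m lam 4 = a K m lam et * a K m lam ga * a K m lam de := rfl
  have hmm : m - 1 + 2 = m + 1 := by omega
  -- Case 2 : t = ρωβ, s = εηβ
  have hA2 : a K m lam rh * a K m lam om * a K m lam be =
      a K m lam ep * a K m lam et * a K m lam be +
        lam • ((a K m lam rh * a K m lam om * a K m lam be) ^ (m - 1) *
          (a K m lam ep * a K m lam et * a K m lam be)) :=
    HT.caseA m lam _ _ _ _ _ _ _ _ rel_rh' hu2
  have hB2 : (a K m lam rh * a K m lam om * a K m lam be) ^ (m + 1) = 0 := by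
    rw [← hmm]
    exact HT.caseB (m - 1) _ _ _ _ _ zrh rel_be'
  obtain ⟨c2a, c2b⟩ := HT.pow_helper hm lam _ _ hA2 hB2
  rw [← hX1] at c2a c2b
  -- Case 4 : t = γδη, s = βεη
  have hA4 : a K m lam ga * a K m lam de * a K m lam et =
      a K m lam be * a K m lam ep * a K m lam et +
        lam • ((a K m lam ga * a K m lam de * a K m lam et) ^ (m - 1) *
          (a K m lam be * a K m lam ep * a K m lam et)) :=
    HT.caseA m lam _ _ _ _ _ _ _ _ rel_ga' hu4
  have hB4 : (a K m lam ga * a K m lam de * a K m lam et) ^ (m + 1) = 0 := by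
    rw [← hmm]
    exact HT.caseB (m - 1) _ _ _ _ _ zga rel_et'
  obtain ⟨c4a, c4b⟩ := HT.pow_helper hm lam _ _ hA4 hB4
  rw [← hX3] at c4a c4b
  -- Case 5 : t = ηγδ, s = ηβε
  have hA5 : a K m lam et * a K m lam ga * a K m lam de =
      a K m lam et * a K m lam be * a K m lam ep +
        lam • ((a K m lam et * a K m lam ga * a K m lam de) ^ (m - 1) *
          (a K m lam et * a K m lam be * a K m lam ep)) :=
    HT.caseA' m lam _ _ _ _ _ _ _ rel_ga' hu4
  have hB5 : (a K m lam et * a K m lam ga * a K m lam de) ^ (m + 1) = 0 := by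
    rw [← hmm]
    exact HT.caseB (m - 1) _ _ _ _ _ zet rel_de'
  obtain ⟨c5a, c5b⟩ := HT.pow_helper hm lam _ _ hA5 hB5
  rw [← hX4] at c5a c5b
  exact ⟨c2a, c4a, c5a, c2b, c4b, c5b⟩
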